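/- Let G be a simple graph, C a longest cycle in G with a fixed orientation, and H a connected component of G − V(C). Then no vertex of C that has a neighbor in H is immediately followed on C by another vertex of C with a neighbor in H; that is, N_G(H) ∩ V(C) and its set of successors along C are disjoint. -/

import Mathlib

open SimpleGraph

def IsCycleEmb {V : Type*} (G : SimpleGraph V) (n : ℕ) (f : ZMod n → V) : Prop :=
  3 ≤ n ∧ Function.Injective f ∧ ∀ i : ZMod n, G.Adj (f i) (f (i + 1))

def IsLongestCycle {V : Type*} (G : SimpleGraph V) (n : ℕ) (f : ZMod n → V) : Prop :=
  IsCycleEmb G n f ∧ ∀ (m : ℕ) (g : ZMod m → V), IsCycleEmb G m g → m ≤ n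

def IsDominatingCycle {V : Type*} (G : SimpleGraph V) (n : ℕ) (f : ZMod n → V) : Prop :=
  IsCycleEmb G n f ∧ ∀ a b : V, G.Adj a b → a ∈ Set.range f ∨ b ∈ Set.range f

def IsCompOutside {V : Type*} (G : SimpleGraph V) (C : Set V) (H : Set V) : Prop :=
  H.Nonempty ∧ Disjoint H C ∧ (G.induce H).Connected ∧
    ∀ a ∈ H, ∀ b : V, G.Adj a b → b ∉ C → b ∈ H

def TwoConnected {V : Type*} (G : SimpleGraph V) : Prop :=
  3 ≤ Nat.card V ∧ ∀ v : V, (G.induce ({v}ᶜ : Set V)).Connected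

def KConnected {V : Type*} (G : SimpleGraph V) (k : ℕ) : Prop :=
  k < Nat.card V ∧ ∀ S : Set V, S.ncard < k → (G.induce (Sᶜ : Set V)).Connected

def HFree {W V : Type*} (H : SimpleGraph W) (G : SimpleGraph V) : Prop :=
  ¬ Nonempty (H ↪g G)

def IsCompleteMultipartite {V : Type*} (G : SimpleGraph V) : Prop :=
  ∃ s : Setoid V, ∀ a b : V, G.Adj a b ↔ ¬ s.r a b

/-- `W = K₁ + 3K₂`: vertex 0 joined to three disjoint edges 12, 34, 56. -/
def Wgraph : SimpleGraph (Fin 7) :=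
  SimpleGraph.fromRel (fun a b =>
    a = 0 ∨ (a = 1 ∧ b = 2) ∨ (a = 3 ∧ b = 4) ∨ (a = 5 ∧ b = 6))

/-- `Z₁`, the paw: triangle 012 plus pendant edge 23. -/
def pawGraph : SimpleGraph (Fin 4) :=
  SimpleGraph.fromRel (fun a b =>
    (a = 0 ∧ b = 1) ∨ (a = 1 ∧ b = 2) ∨ (a = 0 ∧ b = 2) ∨ (a = 2 ∧ b = 3))

/-- The claw `K₁,₃`. -/
def clawGraph : SimpleGraph (Fin 4) :=
  SimpleGraph.fromRel (fun a _ => a = 0)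

/-- `K₄` minus the edge 23. -/
def K4minusGraph : SimpleGraph (Fin 4) :=
  SimpleGraph.fromRel (fun a b => ¬((a = 2 ∧ b = 3) ∨ (a = 3 ∧ b = 2)))

/-- `K₁,₃**`: spider with legs of lengths 2, 2, 1 (center 0, legs 0-1-2, 0-3-4, 0-5). -/
def spider221 : SimpleGraph (Fin 6) :=
  SimpleGraph.fromRel (fun a b =>
    (a = 0 ∧ b = 1) ∨ (a = 1 ∧ b = 2) ∨ (a = 0 ∧ b = 3) ∨ (a = 3 ∧ b = 4) ∨ (a = 0 ∧ b = 5))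

/-- The theta graph `A_s`: two vertices joined by three internally disjoint paths,
each with `s` internal vertices. -/
def thetaGraph (s : ℕ) : SimpleGraph (Fin 2 ⊕ Fin 3 × Fin s) :=
  SimpleGraph.fromRel (fun a b =>
    (∃ (j : Fin 3) (k : Fin s), a = Sum.inl 0 ∧ b = Sum.inr (j, k) ∧ (k : ℕ) = 0) ∨
    (∃ (j : Fin 3) (k : Fin s), a = Sum.inl 1 ∧ b = Sum.inr (j, k) ∧ (k : ℕ) = s - 1) ∨
    (∃ (j : Fin 3) (k l : Fin s), a = Sum.inr (j, k) ∧ b = Sum.inr (j, l) ∧ (l : ℕ) = (k : ℕ) + 1))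

/-- `A′_s = 2K₁ + sK₂`. -/
def APrime (s : ℕ) : SimpleGraph (Fin 2 ⊕ Fin s × Fin 2) :=
  SimpleGraph.fromRel (fun a b =>
    (∃ (i : Fin 2) (x : Fin s × Fin 2), a = Sum.inl i ∧ b = Sum.inr x) ∨
    (∃ j : Fin s, a = Sum.inr (j, 0) ∧ b = Sum.inr (j, 1)))

/-- `A″_s = K₂ + (2K₂ ∪ K_s)`. -/
def ADoublePrime (s : ℕ) : SimpleGraph (Fin 2 ⊕ (Fin 2 × Fin 2 ⊕ Fin s)) :=
  SimpleGraph.fromRel (fun a b =>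
    (∃ i : Fin 2, a = Sum.inl i) ∨
    (∃ j : Fin 2, a = Sum.inr (Sum.inl (j, 0)) ∧ b = Sum.inr (Sum.inl (j, 1))) ∨
    (∃ p q : Fin s, a = Sum.inr (Sum.inr p) ∧ b = Sum.inr (Sum.inr q)))

/-- `A_s⁽¹⁾`: two disjoint triangles joined by three vertex-disjoint paths with `s`
internal vertices each. -/
def AOne (s : ℕ) : SimpleGraph (Fin 2 × Fin 3 ⊕ Fin 3 × Fin s) :=
  SimpleGraph.fromRel (fun a b =>
    (∃ (t : Fin 2) (i j : Fin 3), a = Sum.inl (t, i) ∧ b = Sum.inl (t, j)) ∨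
    (∃ (j : Fin 3) (k : Fin s), a = Sum.inl (0, j) ∧ b = Sum.inr (j, k) ∧ (k : ℕ) = 0) ∨
    (∃ (j : Fin 3) (k : Fin s), a = Sum.inl (1, j) ∧ b = Sum.inr (j, k) ∧ (k : ℕ) = s - 1) ∨
    (∃ (j : Fin 3) (k l : Fin s), a = Sum.inr (j, k) ∧ b = Sum.inr (j, l) ∧ (l : ℕ) = (k : ℕ) + 1))

/-- `A_s⁽⁵⁾`: vertices `x₁, x₂` and `y_{i,j}`; edges `x₁x₂`, `y_{1,j}y_{2,j}`, `x_i y_{i,j}`. -/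
def AFive (s : ℕ) : SimpleGraph (Fin 2 ⊕ Fin 2 × Fin s) :=
  SimpleGraph.fromRel (fun a b =>
    (a = Sum.inl 0 ∧ b = Sum.inl 1) ∨
    (∃ j : Fin s, a = Sum.inr (0, j) ∧ b = Sum.inr (1, j)) ∨
    (∃ (i : Fin 2) (j : Fin s), a = Sum.inl i ∧ b = Sum.inr (i, j)))

/-- If `C` is a longest cycle and `H` a component of `G - V(C)`, then no vertex of `C`
with a neighbor in `H` is immediately followed on `C` by another such vertex. -/
theorem stmt0 {V : Type*} [Fintype V] (G : SimpleGraph V) (n : ℕ) (f : ZMod n → V)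
    (H : Set V) (hC : IsLongestCycle G n f) (hH : IsCompOutside G (Set.range f) H)
    (i : ZMod n) (hi : ∃ x ∈ H, G.Adj (f i) x) :
    ¬ ∃ x ∈ H, G.Adj (f (i + 1)) x := by
  rintro ⟨y, hyH, hy⟩
  obtain ⟨x, hxH, hx⟩ := hi
  obtain ⟨hcyc, hmax⟩ := hC
  obtain ⟨h3, hfinj, hfadj⟩ := hcyc
  obtain ⟨_, hdisj, hconn, _⟩ := hH
  haveI : NeZero n := ⟨by omega⟩
  classical
  -- get a path in the induced graph from x to y
  obtain ⟨w⟩ := hconn.preconnected ⟨x, hxH⟩ ⟨y, hyH⟩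
  set p := w.toPath with hp
  set L : List V := p.1.support.map Subtype.val with hL
  have hLnd : L.Nodup := p.2.support_nodup.map Subtype.val_injective
  have hLmem : ∀ a ∈ L, a ∈ H := by
    intro a ha
    simp only [hL, List.mem_map] at ha
    obtain ⟨⟨b, hb⟩, _, rfl⟩ := ha
    exact hb
  have hLchain : List.Chain' G.Adj L := by
    rw [hL]
    refine (List.isChain_map _).mpr ?_
    exact (SimpleGraph.Walk.isChain_adj_support p.1).imp (fun a b h => h)
  set q := L.length with hq
  have hLne : L ≠ [] := by
    rw [hL]
    exact fun hcon => p.1.support_ne_nil (List.map_eq_nil_iff.mp hcon)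
  have hq1 : 1 ≤ q := by
    rw [hq]
    exact List.length_pos_iff.mpr hLne
  have hhead : L.get ⟨0, by omega⟩ = x := by
    have h1 : L.head hLne = x := by
      simp_rw [hL]
      rw [List.head_map]
      simp
    rw [List.head_eq_getElem_zero] at h1
    exact h1
  have hlast : L.get ⟨q - 1, by omega⟩ = y := by
    have h1 : L.getLast hLne = y := by
      simp_rw [hL]
      rw [List.getLast_map]
      simp
    rw [List.getLast_eq_getElem] at h1
    exact h1
  set m := n + q with hm
  haveI : NeZero m := ⟨by omega⟩
  haveI : Fact (1 < m) := ⟨by omega⟩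
  have hvlt : ∀ j : ZMod m, j.val < m := fun j => ZMod.val_lt j
  set g : ZMod m → V := fun j =>
    if h : j.val < q then L.get ⟨j.val, h⟩ else f (i + 1 + ((j.val - q : ℕ) : ZMod n))
    with hg
  have hsucc : ∀ j : ZMod m, (j + 1).val = (j.val + 1) % m := by
    intro j
    rw [ZMod.val_add, ZMod.val_one]
  have hnotin : ∀ a : ZMod n, f a ∉ H := by
    intro a ha
    exact Set.disjoint_left.mp hdisj ha ⟨a, rfl⟩
  have hginj : Function.Injective g := by
    intro j1 j2 hEq
    rw [hg] at hEq
    simp only at hEq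
    by_cases h1 : j1.val < q <;> by_cases h2 : j2.val < q
    · rw [dif_pos h1, dif_pos h2] at hEq
      have := (List.Nodup.get_inj_iff hLnd).mp hEq
      apply ZMod.val_injective
      simpa using this
    · rw [dif_pos h1, dif_neg h2] at hEq
      exact absurd (hEq ▸ hLmem _ (List.get_mem _ _)) (hnotin _)
    · rw [dif_neg h1, dif_pos h2] at hEq
      exact absurd (hEq ▸ hLmem _ (List.get_mem _ _)) (hnotin _)
    · rw [dif_neg h1, dif_neg h2] at hEq
      have h3' := hfinj hEq
      have h4 : ((j1.val - q : ℕ) : ZMod n) = ((j2.val - q : ℕ) : ZMod n) := by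
        have := add_left_cancel h3'
        exact this
      have l1 : j1.val - q < n := by have := hvlt j1; omega
      have l2 : j2.val - q < n := by have := hvlt j2; omega
      have : j1.val - q = j2.val - q := by
        have := congrArg ZMod.val h4
        rwa [ZMod.val_cast_of_lt l1, ZMod.val_cast_of_lt l2] at this
      apply ZMod.val_injective
      omega
  have hgdef1 : ∀ (k : ZMod m) (h : k.val < q), g k = L.get ⟨k.val, h⟩ :=
    fun k h => dif_pos h
  have hgdef2 : ∀ (k : ZMod m), ¬ k.val < q → g k = f (i + 1 + ((k.val - q : ℕ) : ZMod n)) :=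
    fun k h => dif_neg h
  have hgadj : ∀ j : ZMod m, G.Adj (g j) (g (j + 1)) := by
    intro j
    have hjlt := hvlt j
    rcases lt_trichotomy (j.val + 1) q with hc | hc | hc
    · -- both inside L
      have hs : (j + 1).val = j.val + 1 := by rw [hsucc]; exact Nat.mod_eq_of_lt (by omega)
      rw [hgdef1 j (by omega), hgdef1 (j + 1) (by omega)]
      have hfin : (⟨(j + 1).val, by omega⟩ : Fin L.length) = ⟨j.val + 1, by omega⟩ :=
        Fin.mk_eq_mk.mpr hs
      rw [hfin]
      exact List.isChain_iff_getElem.mp hLchain j.val (by omega)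
    · -- boundary: last of L to f (i+1)
      have hs : (j + 1).val = j.val + 1 := by rw [hsucc]; exact Nat.mod_eq_of_lt (by omega)
      rw [hgdef1 j (by omega), hgdef2 (j + 1) (by omega), hs]
      have e1 : L.get ⟨j.val, by omega⟩ = y := by
        have hfin : (⟨j.val, by omega⟩ : Fin L.length) = ⟨q - 1, by omega⟩ :=
          Fin.mk_eq_mk.mpr (by omega)
        rw [hfin]
        exact hlast
      have e2 : ((j.val + 1 - q : ℕ) : ZMod n) = 0 := by
        have h0 : j.val + 1 - q = 0 := by omega
        simp [h0]
      rw [e1, e2, add_zero]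
      exact hy.symm
    · rcases lt_or_eq_of_le (Nat.succ_le_of_lt hjlt) with hc2 | hc2
      · -- inside f part
        have hs : (j + 1).val = j.val + 1 := by rw [hsucc]; exact Nat.mod_eq_of_lt (by omega)
        rw [hgdef2 j (by omega), hgdef2 (j + 1) (by omega), hs]
        have e : ((j.val + 1 - q : ℕ) : ZMod n) = ((j.val - q : ℕ) : ZMod n) + 1 := by
          have h0 : j.val + 1 - q = (j.val - q) + 1 := by omega
          rw [h0]
          push_cast
          ring
        rw [e, ← add_assoc]
        exact hfadj _
      · -- wrap-around
        have hs : (j + 1).val = 0 := by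
          rw [hsucc, show j.val + 1 = m by omega, Nat.mod_self]
        rw [hgdef2 j (by omega), hgdef1 (j + 1) (by omega)]
        have hfin : (⟨(j + 1).val, by omega⟩ : Fin L.length) = ⟨0, by omega⟩ :=
          Fin.mk_eq_mk.mpr hs
        rw [hfin, hhead]
        have e1 : j.val - q = n - 1 := by omega
        have e2 : i + 1 + ((n - 1 : ℕ) : ZMod n) = i := by
          have h0 : ((1 + (n - 1) : ℕ) : ZMod n) = 0 := by
            rw [show 1 + (n - 1) = n by omega, ZMod.natCast_self]
          push_cast at h0
          rw [add_assoc, h0, add_zero]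
        rw [e1, e2]
        exact hx
  have := hmax m g ⟨by omega, hginj, hgadj⟩
  omega
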